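/- For the Pitman–Stanley polynomial P_n(x) = Σ_{(a_1,...,a_n) ∈ park(n)} x_{a_1}···x_{a_n}, where park(n) is the set of classical parking functions of length n (sequences in {1,...,n}^n whose i-th order statistic is at most i), the specialization x = (α, β, ..., β) gives P_n(x) = α·(α + nβ)^{n-1}. -/

import Mathlib

open Finset
open scoped Classical

/-- Classical parking functions of length `n`, 0-indexed: functions `c : Fin n → Fin n`
whose nondecreasing rearrangement satisfies `c_(i) ≤ i`; the car parking at spot
`j ∈ {1,…,n}` corresponds to the value `j - 1 : Fin n`. -/
noncomputable def park (n : ℕ) : Finset (Fin n → Fin n) :=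
  Finset.univ.filter (fun c => ∃ σ : Equiv.Perm (Fin n),
    (∀ i j : Fin n, i ≤ j → c (σ i) ≤ c (σ j)) ∧ ∀ i, (c (σ i) : ℕ) ≤ (i : ℕ))

variable {n : ℕ}


/-- offset of first free spot at or after `s` (going cyclically forward). -/
noncomputable def ffo (O : Finset (ZMod n)) (s : ZMod n) : ℕ :=
  if h : ∃ k : ℕ, s + (k : ZMod n) ∉ O then Nat.find h else 0

noncomputable def ff (O : Finset (ZMod n)) (s : ZMod n) : ZMod n := s + (ffo O s : ZMod n)

noncomputable def occ (c : ℕ → ZMod n) : ℕ → Finset (ZMod n)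
  | 0 => ∅
  | i + 1 => insert (ff (occ c i) (c i)) (occ c i)

noncomputable def spot (c : ℕ → ZMod n) (i : ℕ) : ZMod n := ff (occ c i) (c i)

lemma ffo_le {O : Finset (ZMod n)} {s : ZMod n} {k : ℕ} (hk : s + (k : ZMod n) ∉ O) :
    ffo O s ≤ k := by
  rw [ffo, dif_pos ⟨k, hk⟩]
  exact Nat.find_le hk

lemma exists_not_mem_add [NeZero n] {O : Finset (ZMod n)} (hO : O ≠ univ) (s : ZMod n) :
    ∃ k : ℕ, s + (k : ZMod n) ∉ O := by
  obtain ⟨x, hx⟩ : ∃ x, x ∉ O := by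
    by_contra h
    push_neg at h
    exact hO (eq_univ_iff_forall.2 h)
  refine ⟨(x - s).val, ?_⟩
  rwa [ZMod.natCast_val, ZMod.cast_id, add_sub_cancel]

lemma ff_not_mem [NeZero n] {O : Finset (ZMod n)} (hO : O ≠ univ) (s : ZMod n) :
    ff O s ∉ O := by
  rw [ff, ffo, dif_pos (exists_not_mem_add hO s)]
  exact Nat.find_spec (exists_not_mem_add hO s)

lemma occ_subset_occ (c : ℕ → ZMod n) {i j : ℕ} (h : i ≤ j) : occ c i ⊆ occ c j := by
  induction j with
  | zero => simpa [Nat.le_zero.1 h] using Finset.Subset.refl _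
  | succ j ih =>
    rcases Nat.lt_or_ge i (j+1) with h' | h'
    · exact (ih (Nat.lt_succ_iff.1 h')).trans (Finset.subset_insert _ _)
    · have : i = j + 1 := le_antisymm h h'
      simp [this]

lemma occ_card [NeZero n] (c : ℕ → ZMod n) : ∀ i, i ≤ n → (occ c i).card = i := by
  intro i
  induction i with
  | zero => simp [occ]
  | succ i ih =>
    intro hi
    have hcard := ih (by omega)
    have hne : occ c i ≠ univ := by
      intro h
      rw [h, card_univ, ZMod.card] at hcard
      omega
    rw [occ, Finset.card_insert_of_notMem (ff_not_mem hne _), hcard]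

lemma occ_ne_univ [NeZero n] (c : ℕ → ZMod n) {i : ℕ} (hi : i < n) : occ c i ≠ univ := by
  intro h
  have := occ_card c i (by omega)
  rw [h, card_univ, ZMod.card] at this
  omega

lemma spot_not_mem [NeZero n] (c : ℕ → ZMod n) {i : ℕ} (hi : i < n) :
    spot c i ∉ occ c i := ff_not_mem (occ_ne_univ c hi) _

lemma mem_occ_iff (c : ℕ → ZMod n) {i : ℕ} {x : ZMod n} :
    x ∈ occ c i ↔ ∃ j < i, spot c j = x := by
  induction i with
  | zero => simp [occ]
  | succ i ih =>
    simp only [occ, Finset.mem_insert, ih]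
    constructor
    · rintro (rfl | ⟨j, hj, rfl⟩)
      · exact ⟨i, by omega, rfl⟩
      · exact ⟨j, by omega, rfl⟩
    · rintro ⟨j, hj, rfl⟩
      rcases Nat.lt_or_ge j i with h | h
      · exact Or.inr ⟨j, h, rfl⟩
      · have : j = i := by omega
        subst this; exact Or.inl rfl

lemma spot_mem_occ (c : ℕ → ZMod n) {i j : ℕ} (h : i < j) : spot c i ∈ occ c j :=
  (mem_occ_iff c).2 ⟨i, h, rfl⟩

lemma spot_injOn [NeZero n] (c : ℕ → ZMod n) {i j : ℕ} (hij : i < j) (hj : j < n) :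
    spot c i ≠ spot c j := by
  intro h
  exact spot_not_mem c hj (h ▸ spot_mem_occ c hij)

lemma occ_congr {c c' : ℕ → ZMod n} : ∀ {i : ℕ}, (∀ j < i, c j = c' j) → occ c i = occ c' i
  | 0, _ => rfl
  | i + 1, h => by
    have hi : occ c i = occ c' i := occ_congr (fun j hj => h j (by omega))
    rw [occ, occ, hi, h i (by omega)]

lemma ffo_congr {O O' : Finset (ZMod n)} {s s' : ZMod n}
    (H : ∀ k : ℕ, s' + (k : ZMod n) ∉ O' ↔ s + (k : ZMod n) ∉ O) :
    ffo O' s' = ffo O s := by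
  unfold ffo
  by_cases h : ∃ k : ℕ, s + (k : ZMod n) ∉ O
  · have h' : ∃ k : ℕ, s' + (k : ZMod n) ∉ O' := by
      obtain ⟨k, hk⟩ := h; exact ⟨k, (H k).2 hk⟩
    rw [dif_pos h, dif_pos h']
    exact le_antisymm (Nat.find_le ((H _).2 (Nat.find_spec h)))
      (Nat.find_le ((H _).1 (Nat.find_spec h')))
  · have h' : ¬ ∃ k : ℕ, s' + (k : ZMod n) ∉ O' := by
      rintro ⟨k, hk⟩; exact h ⟨k, (H k).1 hk⟩
    rw [dif_neg h, dif_neg h']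

lemma ff_add (O : Finset (ZMod n)) (s t : ZMod n) :
    ff (O.image (· + t)) (s + t) = ff O s + t := by
  have H : ∀ k : ℕ, (s + t) + (k : ZMod n) ∉ O.image (· + t) ↔ s + (k : ZMod n) ∉ O := by
    intro k
    rw [Finset.mem_image]
    constructor
    · intro h hmem
      exact h ⟨s + k, hmem, by ring⟩
    · rintro h ⟨x, hx, hxe⟩
      apply h
      have : x = s + k := by
        have h2 : x + t = (s + (k : ZMod n)) + t := by rw [hxe]; ring
        exact add_right_cancel h2
      exact this ▸ hx
  rw [ff, ff, ffo_congr H]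
  ring

lemma occ_add (c : ℕ → ZMod n) (t : ZMod n) :
    ∀ i, occ (fun j => c j + t) i = (occ c i).image (· + t) := by
  intro i
  induction i with
  | zero => simp [occ]
  | succ i ih =>
    rw [occ, occ, ih, Finset.image_insert, ff_add]

/-- The "last spot" `n-1` of the circle `ZMod n`. -/
noncomputable def lastSpot (n : ℕ) : ZMod n := ((n - 1 : ℕ) : ZMod n)

/-- Counting condition: `c` restricted to cars `0,…,m-1` is a parking function for
the `n-1` linear spots `0,…,n-2`. -/
def CondL (n m : ℕ) (c : ℕ → ZMod n) : Prop :=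
  ∀ j : ℕ, ((Finset.range m).filter fun i => j ≤ (c i).val).card ≤ n - 1 - j

lemma lastSpot_val [NeZero n] : (lastSpot n).val = n - 1 := by
  rw [lastSpot, ZMod.val_cast_of_lt]
  have := NeZero.pos n
  omega

/-- If some spot `b` with `b ∉ occ c i` lies (linearly) at or beyond the preference of
car `i`, then car `i` parks between its preference and `b` with no wraparound. -/
lemma spot_val_bounds [NeZero n] {c : ℕ → ZMod n} {i : ℕ} {b : ZMod n}
    (hb : b ∉ occ c i) (hv : (c i).val ≤ b.val) :
    (c i).val ≤ (spot c i).val ∧ (spot c i).val ≤ b.val := by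
  set k : ℕ := b.val - (c i).val with hk
  have hck : c i + (k : ZMod n) = b := by
    have h1 : ((c i).val + k : ℕ) = b.val := by omega
    calc c i + (k : ZMod n) = (((c i).val + k : ℕ) : ZMod n) := by
          push_cast [ZMod.natCast_val, ZMod.cast_id]; ring
      _ = (b.val : ZMod n) := by rw [h1]
      _ = b := by rw [ZMod.natCast_val, ZMod.cast_id]
  have hle : ffo (occ c i) (c i) ≤ k := ffo_le (hck ▸ hb)
  have hlt : (c i).val + ffo (occ c i) (c i) < n := by
    have := b.val_lt
    omega
  have hval : (spot c i).val = (c i).val + ffo (occ c i) (c i) := by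
    rw [spot, ff, ZMod.val_add_of_lt]
    · rw [ZMod.val_cast_of_lt]
      omega
    · rw [ZMod.val_cast_of_lt] <;> omega
  constructor
  · omega
  · omega

lemma val_eq_lastSpot [NeZero n] {x : ZMod n} (h : x.val = n - 1) : x = lastSpot n := by
  have : (x.val : ZMod n) = ((n-1 : ℕ) : ZMod n) := by rw [h]
  rwa [ZMod.natCast_val, ZMod.cast_id] at this

/-- Direction →: if the last spot stays empty then the counting condition holds. -/
lemma condL_of_not_mem [NeZero n] {c : ℕ → ZMod n} {m : ℕ} (hm : m ≤ n)
    (hL : lastSpot n ∉ occ c m) : CondL n m c := by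
  intro j
  set T := (Finset.range m).filter fun i => j ≤ (c i).val with hT
  set U := (univ : Finset (ZMod n)).filter fun x => j ≤ x.val ∧ x ≠ lastSpot n with hU
  have hTU : T.card ≤ U.card := by
    apply Finset.card_le_card_of_injOn (fun i => spot c i)
    · intro i hi
      rw [hT, Finset.mem_coe, Finset.mem_filter, Finset.mem_range] at hi
      obtain ⟨him, hij⟩ := hi
      have hbi : lastSpot n ∉ occ c i := fun h => hL (occ_subset_occ c (by omega) h)
      have hvb : (c i).val ≤ (lastSpot n).val := by
        rw [lastSpot_val]; have := (c i).val_lt; omega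
      obtain ⟨h1, h2⟩ := spot_val_bounds hbi hvb
      rw [hU, Finset.mem_coe, Finset.mem_filter]
      beta_reduce
      refine ⟨Finset.mem_univ _, by omega, ?_⟩
      intro h
      exact hL (h ▸ spot_mem_occ c him)
    · intro a ha b hb hab
      simp only [Finset.mem_coe] at ha hb
      rw [hT, Finset.mem_filter, Finset.mem_range] at ha hb
      by_contra hne
      rcases Nat.lt_or_ge a b with h | h
      · exact spot_injOn c h (by omega) hab
      · exact spot_injOn c (by omega) (by omega) hab.symm
  have hUcard : U.card ≤ n - 1 - j := by
    rcases Nat.lt_or_ge n 2 with h2 | h2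
    · -- n = 1 : U is empty
      have hn1 : n = 1 := by have := NeZero.pos n; omega
      have : U = ∅ := by
        rw [hU, Finset.eq_empty_iff_forall_notMem]
        intro x hx
        rw [Finset.mem_filter] at hx
        exact hx.2.2 (val_eq_lastSpot (by have := x.val_lt; omega))
      simp [this]
    · have : U.card ≤ (Finset.Icc j (n-2)).card := by
        apply Finset.card_le_card_of_injOn (fun x => x.val)
        · intro x hx
          rw [hU, Finset.mem_coe, Finset.mem_filter] at hx
          rw [Finset.mem_coe, Finset.mem_Icc]
          refine ⟨hx.2.1, ?_⟩
          have hlt := x.val_lt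
          have : x.val ≠ n - 1 := fun h => hx.2.2 (val_eq_lastSpot h)
          beta_reduce
          omega
        · intro a _ b _ h
          exact ZMod.val_injective n h
      rw [Nat.card_Icc] at this
      omega
  omega

/-- Direction ←: the counting condition implies the last spot stays empty. -/
lemma not_mem_of_condL [NeZero n] {c : ℕ → ZMod n} {m : ℕ} (h : CondL n m c) :
    lastSpot n ∉ occ c m := by
  intro hL
  have hmn : m ≤ n - 1 := by
    have h0 := h 0
    have : ((Finset.range m).filter fun i => 0 ≤ (c i).val).card = m := by
      rw [Finset.filter_true_of_mem (fun _ _ => Nat.zero_le _), Finset.card_range]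
    omega
  have hnpos := NeZero.pos n
  have hocc_card : (occ c m).card = m := occ_card c m (by omega)
  -- the set of block starts
  set A := (Finset.range n).filter
    (fun v => ∀ w, v ≤ w → w < n → ((w : ℕ) : ZMod n) ∈ occ c m) with hA
  have hAne : (n - 1) ∈ A := by
    rw [hA, Finset.mem_filter, Finset.mem_range]
    refine ⟨by omega, fun w hw1 hw2 => ?_⟩
    have : w = n - 1 := by omega
    subst this
    rwa [show (((n-1 : ℕ)) : ZMod n) = lastSpot n from rfl]
  set s₀ := A.min' ⟨n-1, hAne⟩ with hs₀
  have hs₀A : s₀ ∈ A := A.min'_mem _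
  rw [hA, Finset.mem_filter, Finset.mem_range] at hs₀A
  obtain ⟨hs₀n, hblock⟩ := hs₀A
  have hs₀pos : 1 ≤ s₀ := by
    by_contra hcon
    push_neg at hcon
    have hz : s₀ = 0 := by omega
    -- then all n spots occupied, contradiction with card m ≤ n-1
    have : (Finset.range n).image (fun w => ((w : ℕ) : ZMod n)) ⊆ occ c m := by
      intro x hx
      rw [Finset.mem_image] at hx
      obtain ⟨w, hw, rfl⟩ := hx
      exact hblock w (by omega) (Finset.mem_range.1 hw)
    have hinj : ((Finset.range n).image (fun w => ((w : ℕ) : ZMod n))).card = n := by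
      rw [Finset.card_image_of_injOn, Finset.card_range]
      intro a ha b hb hab
      have := ZMod.val_cast_of_lt (Finset.mem_range.1 ha)
      have := ZMod.val_cast_of_lt (Finset.mem_range.1 hb)
      have : a = b := by
        have h2 := congrArg ZMod.val hab
        rwa [ZMod.val_cast_of_lt (Finset.mem_range.1 ha),
          ZMod.val_cast_of_lt (Finset.mem_range.1 hb)] at h2
      exact this
    have := Finset.card_le_card this
    omega
  -- spot s₀ - 1 is free
  have hs₀m1 : ((s₀ - 1 : ℕ) : ZMod n) ∉ occ c m := by
    have hlt : ¬ (s₀ - 1 ∈ A) := by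
      intro hmem
      have := A.min'_le _ hmem
      omega
    rw [hA, Finset.mem_filter, Finset.mem_range] at hlt
    push_neg at hlt
    obtain ⟨w, hw1, hw2, hw3⟩ := hlt (by omega)
    rcases Nat.lt_or_ge w s₀ with hws | hws
    · have : w = s₀ - 1 := by omega
      subst this; exact hw3
    · exact absurd (hblock w hws hw2) hw3
  -- every car parked at val ≥ s₀ had preference val ≥ s₀
  have hclaim : ∀ i < m, s₀ ≤ (spot c i).val → s₀ ≤ (c i).val := by
    intro i him hsp
    by_contra hcon
    push_neg at hcon
    have hbi : ((s₀ - 1 : ℕ) : ZMod n) ∉ occ c i :=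
      fun hmem => hs₀m1 (occ_subset_occ c (by omega) hmem)
    have hbv : (c i).val ≤ (((s₀ - 1 : ℕ) : ZMod n)).val := by
      rw [ZMod.val_cast_of_lt (by omega)]
      omega
    obtain ⟨_, h2⟩ := spot_val_bounds hbi hbv
    rw [ZMod.val_cast_of_lt (by omega)] at h2
    omega
  -- count cars parked at spots with val ≥ s₀
  have hcount : n - s₀ ≤ ((Finset.range m).filter fun i => s₀ ≤ (spot c i).val).card := by
    have hmaps : ∀ v ∈ Finset.Icc s₀ (n-1), ∃ i, i < m ∧ spot c i = ((v : ℕ) : ZMod n) := by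
      intro v hv
      rw [Finset.mem_Icc] at hv
      have : ((v : ℕ) : ZMod n) ∈ occ c m := hblock v hv.1 (by omega)
      obtain ⟨i, hi, hsp⟩ := (mem_occ_iff c).1 this
      exact ⟨i, hi, hsp⟩
    have := Finset.card_le_card_of_injOn
      (fun v => if h : ∃ i, i < m ∧ spot c i = ((v : ℕ) : ZMod n) then Classical.choose h else 0)
      (s := Finset.Icc s₀ (n-1))
      (t := (Finset.range m).filter fun i => s₀ ≤ (spot c i).val)
      ?_ ?_
    · rw [Nat.card_Icc] at this
      omega
    · intro v hv
      have hex := hmaps v hv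
      beta_reduce
      rw [dif_pos hex]
      obtain ⟨hi, hsp⟩ := Classical.choose_spec hex
      rw [Finset.mem_coe, Finset.mem_filter, Finset.mem_range]
      refine ⟨hi, ?_⟩
      rw [hsp, ZMod.val_cast_of_lt]
      · exact (Finset.mem_Icc.1 hv).1
      · have := (Finset.mem_Icc.1 hv).2; omega
    · intro a ha b hb hab
      simp only [Finset.mem_coe] at ha hb
      have ha' : a ≤ n - 1 := (Finset.mem_Icc.1 ha).2
      have hb' : b ≤ n - 1 := (Finset.mem_Icc.1 hb).2
      have hexa := hmaps a ha
      have hexb := hmaps b hb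
      simp only [dif_pos hexa, dif_pos hexb] at hab
      have hsa := (Classical.choose_spec hexa).2
      have hsb := (Classical.choose_spec hexb).2
      rw [hab] at hsa
      rw [hsa] at hsb
      have heq := congrArg ZMod.val hsb
      rw [ZMod.val_cast_of_lt (by omega), ZMod.val_cast_of_lt (by omega)] at heq
      omega
  have hsub : ((Finset.range m).filter fun i => s₀ ≤ (spot c i).val) ⊆
      ((Finset.range m).filter fun i => s₀ ≤ (c i).val) := by
    intro i hi
    rw [Finset.mem_filter, Finset.mem_range] at hi ⊢
    exact ⟨hi.1, hclaim i hi.1 hi.2⟩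
  have hcard := Finset.card_le_card hsub
  have hcond := h s₀
  omega

/-- Extend a `Fin m`-indexed tuple of preferences by junk. -/
noncomputable def extf {n m : ℕ} (d : Fin m → ZMod n) : ℕ → ZMod n :=
  fun i => if h : i < m then d ⟨i, h⟩ else 0

/-- Generalized parking functions: `m` cars on `n-1` linear spots. -/
noncomputable def Gset (n m : ℕ) [NeZero n] : Finset (Fin m → ZMod n) :=
  univ.filter fun d => CondL n m (extf d)

lemma pollak [NeZero n] (m : ℕ) (hm : m ≤ n) :
    n * (Gset n m).card = (n - m) * n ^ m := by
  classical
  have hiff : ∀ d : Fin m → ZMod n,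
      (lastSpot n ∉ occ (extf d) m) ↔ CondL n m (extf d) :=
    fun d => ⟨condL_of_not_mem hm, not_mem_of_condL⟩
  have hGset : Gset n m = univ.filter fun d => lastSpot n ∉ occ (extf d) m := by
    rw [Gset]
    exact (Finset.filter_congr fun d _ => (hiff d)).symm
  have key : ∀ (d : Fin m → ZMod n) (t : ZMod n),
      occ (extf (fun i => d i + t)) m = (occ (extf d) m).image (· + t) := by
    intro d t
    have h1 : occ (extf fun i => d i + t) m = occ (fun j => extf d j + t) m :=
      occ_congr (fun j hj => by simp [extf, hj])
    rw [h1, occ_add]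
  have count1 : ∀ d : Fin m → ZMod n,
      ((univ : Finset (ZMod n)).filter
        fun t => lastSpot n ∉ occ (extf fun i => d i + t) m).card = n - m := by
    intro d
    set O := occ (extf d) m with hO
    have hOcard : O.card = m := occ_card _ m hm
    have hmem : ∀ t : ZMod n,
        (lastSpot n ∉ occ (extf fun i => d i + t) m) ↔ (lastSpot n - t) ∉ O := by
      intro t
      rw [key d t]
      constructor
      · intro h hmem
        exact h (Finset.mem_image.2 ⟨lastSpot n - t, hmem, by ring⟩)
      · intro h hmem
        obtain ⟨x, hx, hxe⟩ := Finset.mem_image.1 hmem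
        apply h
        have : x = lastSpot n - t := by
          have : x + t - t = lastSpot n - t := by rw [hxe]
          simpa using this
        exact this ▸ hx
    rw [Finset.filter_congr fun t _ => hmem t]
    have hbij : ((univ : Finset (ZMod n)).filter fun t => lastSpot n - t ∉ O).card = Oᶜ.card := by
      apply Finset.card_nbij' (i := fun t => lastSpot n - t) (j := fun x => lastSpot n - x)
      · intro a ha
        rw [Finset.mem_coe, Finset.mem_filter] at ha
        simpa [Finset.mem_compl] using ha.2
      · intro a ha
        rw [Finset.mem_coe, Finset.mem_filter]
        refine ⟨Finset.mem_univ _, ?_⟩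
        simpa [Finset.mem_compl, sub_sub_cancel] using ha
      · intro a _
        simp [sub_sub_cancel]
      · intro a _
        simp [sub_sub_cancel]
    rw [hbij, Finset.card_compl, ZMod.card, hOcard]
  -- double counting
  have hdouble :
      ∑ d : Fin m → ZMod n, ((univ : Finset (ZMod n)).filter
        fun t => lastSpot n ∉ occ (extf fun i => d i + t) m).card
      = ∑ t : ZMod n, ((univ : Finset (Fin m → ZMod n)).filter
        fun d => lastSpot n ∉ occ (extf fun i => d i + t) m).card := by
    simp only [Finset.card_filter]
    exact Finset.sum_comm
  have count2 : ∀ t : ZMod n,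
      ((univ : Finset (Fin m → ZMod n)).filter
        fun d => lastSpot n ∉ occ (extf fun i => d i + t) m).card = (Gset n m).card := by
    intro t
    rw [hGset]
    apply Finset.card_nbij' (i := fun d => fun i => d i + t) (j := fun d => fun i => d i - t)
    · intro a ha
      rw [Finset.mem_coe, Finset.mem_filter] at ha ⊢
      exact ⟨Finset.mem_univ _, ha.2⟩
    · intro a ha
      rw [Finset.mem_coe, Finset.mem_filter] at ha ⊢
      refine ⟨Finset.mem_univ _, ?_⟩
      have : extf (fun i => (a i - t) + t) = extf a := by
        funext i
        simp [extf]
      rw [this]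
      exact ha.2
    · intro a _
      funext i
      simp
    · intro a _
      funext i
      simp
  have h1 : ∑ d : Fin m → ZMod n, ((univ : Finset (ZMod n)).filter
      fun t => lastSpot n ∉ occ (extf fun i => d i + t) m).card = n ^ m * (n - m) := by
    rw [Finset.sum_congr rfl fun d _ => count1 d]
    rw [Finset.sum_const, card_univ, Fintype.card_fun, ZMod.card, Fintype.card_fin, smul_eq_mul]
  have h2 : ∑ t : ZMod n, ((univ : Finset (Fin m → ZMod n)).filter
      fun d => lastSpot n ∉ occ (extf fun i => d i + t) m).card = n * (Gset n m).card := by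
    rw [Finset.sum_congr rfl fun t _ => count2 t]
    rw [Finset.sum_const, card_univ, ZMod.card, smul_eq_mul]
  calc n * (Gset n m).card
      = ∑ t : ZMod n, ((univ : Finset (Fin m → ZMod n)).filter
          fun d => lastSpot n ∉ occ (extf fun i => d i + t) m).card := h2.symm
    _ = ∑ d : Fin m → ZMod n, ((univ : Finset (ZMod n)).filter
          fun t => lastSpot n ∉ occ (extf fun i => d i + t) m).card := hdouble.symm
    _ = n ^ m * (n - m) := h1
    _ = (n - m) * n ^ m := Nat.mul_comm _ _

/-- The classical counting characterization of parking functions. -/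
def CondN (n : ℕ) (c : Fin n → Fin n) : Prop :=
  ∀ j : ℕ, ((univ : Finset (Fin n)).filter fun i => j ≤ (c i : ℕ)).card ≤ n - j

lemma card_filter_le_fin (j : ℕ) (hn : 0 < n) :
    ((univ : Finset (Fin n)).filter fun i : Fin n => j ≤ (i : ℕ)).card ≤ n - j := by
  have h : ((univ : Finset (Fin n)).filter fun i : Fin n => j ≤ (i : ℕ)).card
      ≤ (Finset.Icc j (n-1)).card := by
    apply Finset.card_le_card_of_injOn (fun i : Fin n => (i : ℕ))
    · intro x hx
      rw [Finset.mem_coe, Finset.mem_filter] at hx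
      rw [Finset.mem_coe, Finset.mem_Icc]
      beta_reduce
      exact ⟨hx.2, by have := x.isLt; omega⟩
    · intro a _ b _ h
      exact Fin.ext h
  rw [Nat.card_Icc] at h
  omega

lemma park_iff_condN (hn : 0 < n) (c : Fin n → Fin n) :
    c ∈ park n ↔ CondN n c := by
  rw [park, Finset.mem_filter]
  constructor
  · rintro ⟨-, σ, hmono, hle⟩ j
    have hcard : ((univ : Finset (Fin n)).filter fun i => j ≤ (c (σ i) : ℕ)).card
        = ((univ : Finset (Fin n)).filter fun i => j ≤ (c i : ℕ)).card := by
      apply Finset.card_nbij (fun i => σ i)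
      · intro a ha
        rw [Finset.mem_coe, Finset.mem_filter] at ha ⊢
        exact ⟨Finset.mem_univ _, ha.2⟩
      · intro a _ b _ h
        exact σ.injective h
      · intro b hb
        simp only [Finset.coe_filter, Set.mem_setOf_eq, Finset.mem_univ, true_and,
          Set.mem_image] at hb ⊢
        exact ⟨σ.symm b, by simpa using hb, by simp⟩
    have hsub : ((univ : Finset (Fin n)).filter fun i => j ≤ (c (σ i) : ℕ))
        ⊆ (univ : Finset (Fin n)).filter fun i : Fin n => j ≤ (i : ℕ) := by
      intro i hi
      rw [Finset.mem_filter] at hi ⊢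
      exact ⟨Finset.mem_univ _, le_trans hi.2 (hle i)⟩
    have := Finset.card_le_card hsub
    have := card_filter_le_fin (n := n) j hn
    omega
  · intro h
    refine ⟨Finset.mem_univ _, Tuple.sort c, fun i j hij => Tuple.monotone_sort c hij, ?_⟩
    intro i
    by_contra hcon
    push_neg at hcon
    have hsub : ((univ : Finset (Fin n)).filter fun i' : Fin n => i ≤ i').card
        ≤ ((univ : Finset (Fin n)).filter fun i' => (i : ℕ) + 1 ≤ (c i' : ℕ)).card := by
      apply Finset.card_le_card_of_injOn (fun i' => Tuple.sort c i')
      · intro x hx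
        rw [Finset.mem_coe, Finset.mem_filter] at hx ⊢
        refine ⟨Finset.mem_univ _, ?_⟩
        have hmono := Tuple.monotone_sort c hx.2
        have : c (Tuple.sort c i) ≤ c (Tuple.sort c x) := hmono
        beta_reduce
        omega
      · intro a _ b _ h
        exact (Tuple.sort c).injective h
    have hIci : ((univ : Finset (Fin n)).filter fun i' : Fin n => i ≤ i') = Finset.Ici i := by
      ext x
      simp [Finset.mem_Ici]
    have hcardIci : (Finset.Ici i).card = n - (i : ℕ) := by
      rw [Fin.card_Ici]
    have hcond := h ((i : ℕ) + 1)
    have hilt := i.isLt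
    rw [hIci, hcardIci] at hsub
    omega

/-- Bridge between `ℕ`-indexed and `Fin`-indexed counting conditions. -/
lemma condL_extf_iff {m : ℕ} (d : Fin m → ZMod n) :
    CondL n m (extf d) ↔
      ∀ j : ℕ, ((univ : Finset (Fin m)).filter fun i => j ≤ (d i).val).card ≤ n - 1 - j := by
  have hcard : ∀ j : ℕ, ((Finset.range m).filter fun i => j ≤ (extf d i).val).card
      = ((univ : Finset (Fin m)).filter fun i => j ≤ (d i).val).card := by
    intro j
    apply Finset.card_bij (fun a ha => (⟨a, Finset.mem_range.1 (Finset.mem_filter.1 ha).1⟩ : Fin m))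
    · intro a ha
      have h1 := (Finset.mem_filter.1 ha).2
      have h2 := Finset.mem_range.1 (Finset.mem_filter.1 ha).1
      rw [Finset.mem_filter]
      refine ⟨Finset.mem_univ _, ?_⟩
      rwa [extf, dif_pos h2] at h1
    · intro a ha b hb h
      exact congrArg Fin.val h
    · intro b hb
      have h1 := (Finset.mem_filter.1 hb).2
      refine ⟨(b : ℕ), ?_, ?_⟩
      · rw [Finset.mem_filter, Finset.mem_range]
        refine ⟨b.isLt, ?_⟩
        rw [extf, dif_pos b.isLt]
        simpa using h1
      · simp
  constructor
  · intro h j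
    rw [← hcard]
    exact h j
  · intro h j
    rw [hcard j]
    exact h j

section zeroset

variable [NeZero n]

noncomputable def eS (S : Finset (Fin n)) : {x // x ∈ Sᶜ} ≃ Fin (n - S.card) :=
  (Sᶜ).equivFin.trans (finCongr (by rw [Finset.card_compl, Fintype.card_fin]))

/-- Reading off the non-zero entries of `c` along `Sᶜ`, shifted down by one. -/
noncomputable def Phi (S : Finset (Fin n)) (c : Fin n → Fin n) :
    Fin (n - S.card) → ZMod n :=
  fun i => ((((c ((eS S).symm i : Fin n)) : ℕ) - 1 : ℕ) : ZMod n)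

noncomputable def Psi (S : Finset (Fin n)) (d : Fin (n - S.card) → ZMod n) :
    Fin n → Fin n :=
  fun x => if hx : x ∈ Sᶜ then
    ⟨((d (eS S ⟨x, hx⟩)).val + 1) % n, Nat.mod_lt _ (NeZero.pos n)⟩
  else 0

variable (S : Finset (Fin n))

lemma zeroset_eq_iff (c : Fin n → Fin n) :
    ((univ : Finset (Fin n)).filter fun i => c i = 0) = S ↔ (∀ x, c x = 0 ↔ x ∈ S) := by
  constructor
  · intro h x
    rw [← h, Finset.mem_filter]
    simp
  · intro h
    ext x
    rw [Finset.mem_filter]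
    simp [h x]

lemma condN_iff_shift (hn : 0 < n) (c : Fin n → Fin n) :
    CondN n c ↔ ∀ j : ℕ,
      ((univ : Finset (Fin n)).filter fun x => j + 1 ≤ (c x : ℕ)).card ≤ n - 1 - j := by
  constructor
  · intro h j
    have := h (j + 1)
    omega
  · intro h j
    match j with
    | 0 =>
      have : ((univ : Finset (Fin n)).filter fun x => 0 ≤ (c x : ℕ)).card ≤ n := by
        calc _ ≤ (univ : Finset (Fin n)).card := Finset.card_filter_le _ _
          _ = n := by rw [card_univ, Fintype.card_fin]
      omega
    | j + 1 =>
      have := h j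
      omega

lemma phi_val (c : Fin n → Fin n) (i : Fin (n - S.card)) :
    (Phi S c i).val = (c ((eS S).symm i : Fin n) : ℕ) - 1 := by
  rw [Phi, ZMod.val_cast_of_lt]
  have := (c ((eS S).symm i : Fin n)).isLt
  omega

lemma val_pos_of_mem_compl (c : Fin n → Fin n) (hzs : ∀ x, c x = 0 ↔ x ∈ S)
    {x : Fin n} (hx : x ∈ Sᶜ) : 1 ≤ (c x : ℕ) := by
  have hne : c x ≠ 0 := by
    rw [Ne, hzs]
    exact Finset.mem_compl.1 hx
  by_contra hc
  push_neg at hc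
  exact hne (Fin.ext (by rw [Fin.val_zero]; omega))

lemma phi_count (c : Fin n → Fin n) (hzs : ∀ x, c x = 0 ↔ x ∈ S) (j : ℕ) :
    ((univ : Finset (Fin (n - S.card))).filter fun i => j ≤ (Phi S c i).val).card
      = ((univ : Finset (Fin n)).filter fun x => j + 1 ≤ (c x : ℕ)).card := by
  apply Finset.card_bij (fun i _ => (((eS S).symm i : {x // x ∈ Sᶜ}) : Fin n))
  · intro i hi
    rw [Finset.mem_filter] at hi ⊢
    refine ⟨Finset.mem_univ _, ?_⟩
    have h1 := hi.2
    rw [phi_val] at h1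
    have hpos := val_pos_of_mem_compl S c hzs ((eS S).symm i).2
    omega
  · intro a _ b _ h
    exact (eS S).symm.injective (Subtype.ext h)
  · intro x hx
    rw [Finset.mem_filter] at hx
    have hne : c x ≠ 0 := by
      intro h0
      rw [h0] at hx
      have h2 := hx.2
      rw [Fin.val_zero] at h2
      omega
    have hxc : x ∈ Sᶜ := by
      rw [Finset.mem_compl]
      intro hmem
      exact hne ((hzs x).2 hmem)
    refine ⟨eS S ⟨x, hxc⟩, ?_, ?_⟩
    · rw [Finset.mem_filter]
      refine ⟨Finset.mem_univ _, ?_⟩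
      rw [phi_val, Equiv.symm_apply_apply]
      have hceq : (((⟨x, hxc⟩ : {a // a ∈ Sᶜ}) : Fin n)) = x := rfl
      rw [hceq]
      have := hx.2
      omega
    · rw [Equiv.symm_apply_apply]

lemma gset_val_lt {m : ℕ} (d : Fin m → ZMod n)
    (hd : ∀ j : ℕ, ((univ : Finset (Fin m)).filter fun i => j ≤ (d i).val).card ≤ n - 1 - j)
    (i : Fin m) : (d i).val + 1 < n := by
  have h := hd (n - 1)
  by_contra hc
  push_neg at hc
  have hmem : i ∈ (univ : Finset (Fin m)).filter fun i => n - 1 ≤ (d i).val := by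
    rw [Finset.mem_filter]
    exact ⟨Finset.mem_univ _, by omega⟩
  have := Finset.card_pos.2 ⟨i, hmem⟩
  omega

lemma psi_val {d : Fin (n - S.card) → ZMod n}
    (hval : ∀ i, (d i).val + 1 < n) (x : Fin n) (hx : x ∈ Sᶜ) :
    (Psi S d x : ℕ) = (d (eS S ⟨x, hx⟩)).val + 1 := by
  rw [Psi, dif_pos hx]
  exact Nat.mod_eq_of_lt (hval _)

lemma phi_psi {d : Fin (n - S.card) → ZMod n}
    (hval : ∀ i, (d i).val + 1 < n) : Phi S (Psi S d) = d := by
  funext i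
  have hmem : (((eS S).symm i : {x // x ∈ Sᶜ}) : Fin n) ∈ Sᶜ := ((eS S).symm i).2
  have h1 : (Psi S d (((eS S).symm i : {x // x ∈ Sᶜ}) : Fin n) : ℕ)
      = (d (eS S ⟨(((eS S).symm i : {x // x ∈ Sᶜ}) : Fin n), hmem⟩)).val + 1 :=
    psi_val S hval _ hmem
  rw [Subtype.coe_eta, Equiv.apply_symm_apply] at h1
  rw [Phi, h1]
  simp only [Nat.add_sub_cancel]
  rw [ZMod.natCast_val, ZMod.cast_id]

lemma card_park_zeroset (hn : 0 < n) :
    ((park n).filter fun c => ((univ : Finset (Fin n)).filter fun i => c i = 0) = S).card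
      = (Gset n (n - S.card)).card := by
  apply Finset.card_nbij' (i := Phi S) (j := Psi S)
  -- forward membership
  · intro c hc
    rw [Finset.mem_coe, Finset.mem_filter] at hc
    obtain ⟨hpark, hzsF⟩ := hc
    have hzs := (zeroset_eq_iff S c).1 hzsF
    have hcondN := (park_iff_condN hn c).1 hpark
    rw [Finset.mem_coe, Gset, Finset.mem_filter]
    refine ⟨Finset.mem_univ _, ?_⟩
    rw [condL_extf_iff]
    intro j
    rw [phi_count S c hzs j]
    exact (condN_iff_shift hn c).1 hcondN j
  -- backward membership
  · intro d hd
    rw [Finset.mem_coe, Gset, Finset.mem_filter] at hd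
    have hcondF := (condL_extf_iff d).1 hd.2
    have hval := gset_val_lt d hcondF
    have hzs : ∀ x, Psi S d x = 0 ↔ x ∈ S := by
      intro x
      by_cases hx : x ∈ Sᶜ
      · have h1 := psi_val S hval x hx
        constructor
        · intro h0
          rw [h0] at h1
          simp at h1
        · intro hmem
          exact absurd hmem (Finset.mem_compl.1 hx)
      · rw [Finset.mem_compl, not_not] at hx
        constructor
        · intro _; exact hx
        · intro _
          rw [Psi, dif_neg (by rwa [Finset.mem_compl, not_not])]
    rw [Finset.mem_coe, Finset.mem_filter]
    constructor
    · rw [park_iff_condN hn]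
      rw [condN_iff_shift hn]
      intro j
      rw [← phi_count S (Psi S d) hzs j, phi_psi S hval]
      exact hcondF j
    · exact (zeroset_eq_iff S (Psi S d)).2 hzs
  -- left inverse
  · intro c hc
    rw [Finset.mem_coe, Finset.mem_filter] at hc
    have hzs := (zeroset_eq_iff S c).1 hc.2
    funext x
    by_cases hx : x ∈ Sᶜ
    · have hpos := val_pos_of_mem_compl S c hzs hx
      rw [Psi, dif_pos hx]
      apply Fin.ext
      simp only []
      have hPhival : (Phi S c (eS S ⟨x, hx⟩)).val = (c x : ℕ) - 1 := by
        rw [phi_val, Equiv.symm_apply_apply]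
      rw [hPhival]
      have := x.isLt
      have := (c x).isLt
      rw [Nat.sub_add_cancel hpos, Nat.mod_eq_of_lt (by omega)]
    · rw [Finset.mem_compl, not_not] at hx
      rw [Psi, dif_neg (by rwa [Finset.mem_compl, not_not])]
      exact ((hzs x).2 hx).symm
  -- right inverse
  · intro d hd
    rw [Finset.mem_coe, Gset, Finset.mem_filter] at hd
    exact phi_psi S (gset_val_lt d ((condL_extf_iff d).1 hd.2))

end zeroset

/-- The Pitman–Stanley polynomial `P_n(x) = ∑_{a ∈ park(n)} x_{a_1} ⋯ x_{a_n}`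
specialized at `x = (α, β, …, β)` equals `α (α + nβ)^{n-1}`. -/
theorem pitman_stanley_specialization (n : ℕ) (hn : 0 < n) (α β : ℝ) :
    ∑ c ∈ park n, ∏ i, (if (c i : ℕ) = 0 then α else β) =
      α * (α + n * β) ^ (n - 1) := by
  haveI : NeZero n := ⟨hn.ne'⟩
  classical
  have hprod : ∀ c : Fin n → Fin n,
      (∏ i, (if (c i : ℕ) = 0 then α else β)) =
        α ^ ((univ : Finset (Fin n)).filter fun i => c i = 0).card *
          β ^ (n - ((univ : Finset (Fin n)).filter fun i => c i = 0).card) := by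
    intro c
    have hpred : ∀ i : Fin n, ((c i : ℕ) = 0) ↔ (c i = 0) := by
      intro i
      constructor
      · intro h; exact Fin.ext (by rw [Fin.val_zero]; exact h)
      · intro h; rw [h, Fin.val_zero]
    rw [Finset.prod_ite (fun _ => α) (fun _ => β), Finset.prod_const, Finset.prod_const]
    have h1 : ((univ : Finset (Fin n)).filter fun i => (c i : ℕ) = 0) =
        ((univ : Finset (Fin n)).filter fun i => c i = 0) := by
      ext i
      simp only [Finset.mem_filter]
      rw [hpred i]
    have h2 : ((univ : Finset (Fin n)).filter fun i => ¬ (c i : ℕ) = 0).card =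
        n - ((univ : Finset (Fin n)).filter fun i => c i = 0).card := by
      have h3 := Finset.card_filter_add_card_filter_not
        (s := (univ : Finset (Fin n))) (p := fun i => (c i : ℕ) = 0)
      rw [card_univ, Fintype.card_fin, h1] at h3
      omega
    rw [h1, h2]
  have step1 : ∑ c ∈ park n, ∏ i, (if (c i : ℕ) = 0 then α else β)
      = ∑ S ∈ (univ : Finset (Fin n)).powerset,
          (((Gset n (n - S.card)).card : ℝ) * (α ^ S.card * β ^ (n - S.card))) := by
    rw [Finset.sum_congr rfl fun c _ => hprod c]
    rw [← Finset.sum_fiberwise_of_maps_to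
      (g := fun c => (univ : Finset (Fin n)).filter fun i => c i = 0)
      (t := (univ : Finset (Fin n)).powerset)
      (fun c _ => Finset.mem_powerset.2 (Finset.subset_univ _))]
    apply Finset.sum_congr rfl
    intro S _
    have hconst : ∀ c ∈ (park n).filter
        (fun c => ((univ : Finset (Fin n)).filter fun i => c i = 0) = S),
        α ^ ((univ : Finset (Fin n)).filter fun i => c i = 0).card *
          β ^ (n - ((univ : Finset (Fin n)).filter fun i => c i = 0).card)
        = α ^ S.card * β ^ (n - S.card) := by
      intro c hc
      rw [(Finset.mem_filter.1 hc).2]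
    rw [Finset.sum_congr rfl hconst, Finset.sum_const, card_park_zeroset S hn, nsmul_eq_mul]
  have step2 : ∑ S ∈ (univ : Finset (Fin n)).powerset,
        (((Gset n (n - S.card)).card : ℝ) * (α ^ S.card * β ^ (n - S.card)))
      = ∑ k ∈ Finset.range (n+1),
          ((n.choose k : ℝ) * (((Gset n (n - k)).card : ℝ) * (α ^ k * β ^ (n - k)))) := by
    rw [Finset.sum_powerset, card_univ, Fintype.card_fin]
    apply Finset.sum_congr rfl
    intro k _
    have hconst : ∀ S ∈ Finset.powersetCard k (univ : Finset (Fin n)),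
        (((Gset n (n - S.card)).card : ℝ) * (α ^ S.card * β ^ (n - S.card)))
        = (((Gset n (n - k)).card : ℝ) * (α ^ k * β ^ (n - k))) := by
      intro S hS
      rw [(Finset.mem_powersetCard.1 hS).2]
    rw [Finset.sum_congr rfl hconst, Finset.sum_const, Finset.card_powersetCard,
      card_univ, Fintype.card_fin, nsmul_eq_mul]
  rw [step1, step2]
  have hne : (n : ℝ) ≠ 0 := Nat.cast_ne_zero.2 hn.ne'
  apply mul_left_cancel₀ hne
  rw [Finset.mul_sum]
  have hterm : ∀ k ∈ Finset.range (n+1),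
      (n:ℝ) * ((n.choose k : ℝ) * (((Gset n (n - k)).card : ℝ) * (α ^ k * β ^ (n - k))))
        = (n.choose k : ℝ) * ((k : ℝ) * (n:ℝ)^(n-k) * (α ^ k * β ^ (n - k))) := by
    intro k hk
    have hk' : k ≤ n := by rw [Finset.mem_range] at hk; omega
    have hp := pollak (n := n) (n - k) (Nat.sub_le n k)
    rw [show n - (n - k) = k from by omega] at hp
    have hpc : (n:ℝ) * ((Gset n (n-k)).card : ℝ) = (k:ℝ) * (n:ℝ)^(n-k) := by
      exact_mod_cast congrArg (fun x : ℕ => (x : ℝ)) hp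
    calc (n:ℝ) * ((n.choose k : ℝ) * (((Gset n (n - k)).card : ℝ) * (α ^ k * β ^ (n - k))))
        = (n.choose k : ℝ) * (((n:ℝ) * ((Gset n (n-k)).card : ℝ)) * (α ^ k * β ^ (n - k))) := by
          ring
      _ = (n.choose k : ℝ) * ((k : ℝ) * (n:ℝ)^(n-k) * (α ^ k * β ^ (n - k))) := by
          rw [hpc]
  rw [Finset.sum_congr rfl hterm]
  rw [Finset.sum_range_succ']
  have hzero : (n.choose 0 : ℝ) * (((0:ℕ) : ℝ) * (n:ℝ)^(n-0) * (α ^ 0 * β ^ (n - 0))) = 0 := by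
    norm_num
  rw [hzero, add_zero]
  -- now expand the RHS
  rw [add_pow]
  rw [show (n - 1) + 1 = n from by omega]
  rw [Finset.mul_sum, Finset.mul_sum]
  apply Finset.sum_congr rfl
  intro j hj
  have hjn : j < n := Finset.mem_range.1 hj
  have hch : ((j:ℝ)+1) * (n.choose (j+1) : ℝ) = (n : ℝ) * ((n-1).choose j : ℝ) := by
    have h := Nat.add_one_mul_choose_eq (n-1) j
    rw [show (n-1) + 1 = n from by omega] at h
    have h2 : (j+1) * n.choose (j+1) = n * (n-1).choose j := by
      rw [mul_comm, h, mul_comm]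
    exact_mod_cast h2
  have hsub : n - (j+1) = n - 1 - j := by omega
  rw [hsub, mul_pow]
  push_cast
  linear_combination ((n:ℝ))^(n-1-j) * α^(j+1) * β^(n-1-j) * hch
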